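/- Assume π⁻ ≤ α_r·πʷ ≤ π⁺ and Γ_NZ1 ≤ g ≤ Γ_NZ2. Then the point (w_h^NZ, α_r·(w_h^NZ/η_h + g)) lies in the feasible set F and maximizes the profit over F: for all (w_h, w_r) ∈ F, Π(w_h, w_r, g) ≤ Π(w_h^NZ, α_r·(w_h^NZ/η_h + g), g). -/
import Mathlib


open Set

noncomputable section

/-- Net electricity exchange. -/
def netz (αr ηh wh wr g : ℝ) : ℝ := wr / αr - wh / ηh - g

/-- Electricity payment under net metering. -/
def epay (πp πm π0 αr ηh wh wr g : ℝ) : ℝ :=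
  πp * max (netz αr ηh wh wr g) 0 + πm * min (netz αr ηh wh wr g) 0 + π0

/-- WDP profit. -/
def profit (πw πp πm π0 αr αh ηh : ℝ) (C : ℝ → ℝ) (wh wr g : ℝ) : ℝ :=
  πw * (wh + wr) - epay πp πm π0 αr ηh wh wr g - C (wh / αh)

/-- clamp(x, a, b) = max(a, min(x, b)). -/
def clampR (x a b : ℝ) : ℝ := max a (min x b)

/-- Value function: sup of profit over the feasible rectangle. -/
def Pstar (πw πp πm π0 αr αh ηh : ℝ) (C : ℝ → ℝ) (wlh wuh wlr wur g : ℝ) : ℝ :=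
  sSup ((fun p : ℝ × ℝ => profit πw πp πm π0 αr αh ηh C p.1 p.2 g) ''
    (Icc wlh wuh ×ˢ Icc wlr wur))

/-- interior net-zero region Γ_NZ1 ≤ g ≤ Γ_NZ2. -/
theorem optimal_dispatch_NZ_interior
    (πp πm π0 πw αh ηh αr wlh wuh wlr wur : ℝ) (C : ℝ → ℝ)
    (hπ : πm ≤ πp) (hπm : 0 ≤ πm) (hπw : 0 ≤ πw)
    (hαh : 0 < αh) (hηh : 0 < ηh) (hαr : 0 < αr)
    (hwlh : 0 ≤ wlh) (hwhb : wlh ≤ wuh) (hwlr : 0 ≤ wlr) (hwrb : wlr ≤ wur)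
    (hC : StrictConvexOn ℝ univ C) (hCd : Differentiable ℝ C) (hCm : Monotone C)
    (Wfun : ℝ → ℝ)
    (hWfun : ∀ δ : ℝ, Wfun δ ∈ Icc wlh wuh ∧
      ∀ w ∈ Icc wlh wuh,
        (πw + δ / ηh) * w - C (w / αh) ≤ (πw + δ / ηh) * Wfun δ - C (Wfun δ / αh))
    (hmid1 : πm ≤ αr * πw) (hmid2 : αr * πw ≤ πp)
    (g : ℝ)
    (hg1 : wlr / αr - Wfun (αr * πw) / ηh ≤ g)
    (hg2 : g ≤ wur / αr - Wfun (αr * πw) / ηh) :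
    (Wfun (αr * πw) ∈ Icc wlh wuh ∧
      αr * (Wfun (αr * πw) / ηh + g) ∈ Icc wlr wur) ∧
    ∀ wh ∈ Icc wlh wuh, ∀ wr ∈ Icc wlr wur,
      profit πw πp πm π0 αr αh ηh C wh wr g ≤
        profit πw πp πm π0 αr αh ηh C (Wfun (αr * πw)) (αr * (Wfun (αr * πw) / ηh + g)) g := by
  obtain ⟨hmem, hopt⟩ := hWfun (αr * πw)
  set wNZ := Wfun (αr * πw) with hwNZ
  have hwr1 : wlr ≤ αr * (wNZ / ηh + g) := by
    have h := (div_le_iff₀ hαr).mp (by linarith : wlr / αr ≤ wNZ / ηh + g)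
    linarith [mul_comm (wNZ / ηh + g) αr]
  have hwr2 : αr * (wNZ / ηh + g) ≤ wur := by
    have h := (le_div_iff₀ hαr).mp (by linarith : wNZ / ηh + g ≤ wur / αr)
    linarith [mul_comm (wNZ / ηh + g) αr]
  refine ⟨⟨hmem, hwr1, hwr2⟩, ?_⟩
  intro wh hwh wr hwr
  have hz0 : netz αr ηh wNZ (αr * (wNZ / ηh + g)) g = 0 := by
    unfold netz; field_simp; ring
  have hkey : αr * πw * netz αr ηh wh wr g ≤
      πp * max (netz αr ηh wh wr g) 0 + πm * min (netz αr ηh wh wr g) 0 := by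
    set z := netz αr ηh wh wr g with hzdef
    have h1 : αr * πw * max z 0 ≤ πp * max z 0 :=
      mul_le_mul_of_nonneg_right hmid2 (le_max_right z 0)
    have h2 : αr * πw * min z 0 ≤ πm * min z 0 := by
      have hm := min_le_right z 0
      nlinarith
    have h3 : max z 0 + min z 0 = z := by simpa using max_add_min z 0
    nlinarith
  have hW := hopt wh hwh
  have hz : netz αr ηh wh wr g = wr / αr - wh / ηh - g := rfl
  have hwra : αr * (wr / αr) = wr := by field_simp
  have e1 : (αr * πw) / ηh * wh = αr * πw * (wh / ηh) := by ring
  have e2 : (αr * πw) / ηh * wNZ = αr * πw * (wNZ / ηh) := by ring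
  unfold profit epay
  rw [hz0]
  simp only [max_self, min_self, mul_zero]
  nlinarith [hkey, hW, hwra, e1, e2, hz]
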